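/- For densities f₁, f₂ with priors p₁, p₂ > 0 summing to 1, the pointwise identity min{p₁f₁(x), p₂f₂(x)} = 1/2·(p₁f₁(x) + p₂f₂(x)) − 1/2·|p₁f₁(x) − p₂f₂(x)| together with the Cauchy-Schwarz inequality gives the Henze-Penrose lower bound: P_e(f₁,f₂) ≥ 1/2 − 1/2·√(u_HP(f₁,f₂)), where u_HP(f₁,f₂) = ∫ (p₁f₁ − p₂f₂)²/(p₁f₁ + p₂f₂) dx. -/

import Mathlib

open MeasureTheory

theorem stmt_13 {d : ℕ} (f₁ f₂ : (Fin d → ℝ) → ℝ)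
    (hm₁ : Measurable f₁) (hm₂ : Measurable f₂)
    (hnn₁ : ∀ x, 0 ≤ f₁ x) (hnn₂ : ∀ x, 0 ≤ f₂ x)
    (hi₁ : Integrable f₁) (hi₂ : Integrable f₂)
    (hI₁ : ∫ x, f₁ x = 1) (hI₂ : ∫ x, f₂ x = 1)
    (p₁ p₂ : ℝ) (hp₁ : 0 < p₁) (hp₂ : 0 < p₂) (hsum : p₁ + p₂ = 1) :
    (∀ x, min (p₁ * f₁ x) (p₂ * f₂ x) =
      (1 / 2) * (p₁ * f₁ x + p₂ * f₂ x) - (1 / 2) * |p₁ * f₁ x - p₂ * f₂ x|) ∧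
    ∫ x, min (p₁ * f₁ x) (p₂ * f₂ x) ≥
      1 / 2 - (1 / 2) *
        Real.sqrt (∫ x, (p₁ * f₁ x - p₂ * f₂ x) ^ 2 / (p₁ * f₁ x + p₂ * f₂ x)) := by
  -- abbreviations
  have hma : Measurable fun x => p₁ * f₁ x := hm₁.const_mul p₁
  have hmb : Measurable fun x => p₂ * f₂ x := hm₂.const_mul p₂
  have hia : Integrable fun x => p₁ * f₁ x := hi₁.const_mul p₁
  have hib : Integrable fun x => p₂ * f₂ x := hi₂.const_mul p₂
  have hih : Integrable fun x => p₁ * f₁ x + p₂ * f₂ x := hia.add hib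
  have hig : Integrable fun x => |p₁ * f₁ x - p₂ * f₂ x| := (hia.sub hib).abs
  have hann : ∀ x, 0 ≤ p₁ * f₁ x := fun x => mul_nonneg hp₁.le (hnn₁ x)
  have hbnn : ∀ x, 0 ≤ p₂ * f₂ x := fun x => mul_nonneg hp₂.le (hnn₂ x)
  have hIh : ∫ x, (p₁ * f₁ x + p₂ * f₂ x) = 1 := by
    rw [integral_add hia hib, integral_const_mul, integral_const_mul, hI₁, hI₂]
    linarith
  have hGH : ∀ x, |p₁ * f₁ x - p₂ * f₂ x| ≤ p₁ * f₁ x + p₂ * f₂ x := by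
    intro x
    rw [abs_sub_le_iff]
    constructor <;> nlinarith [hann x, hbnn x]
  have hmin : ∀ x, min (p₁ * f₁ x) (p₂ * f₂ x) =
      (1 / 2) * (p₁ * f₁ x + p₂ * f₂ x) - (1 / 2) * |p₁ * f₁ x - p₂ * f₂ x| := by
    intro x
    rcases le_total (p₁ * f₁ x) (p₂ * f₂ x) with h | h
    · rw [min_eq_left h, abs_of_nonpos (by linarith)]; ring
    · rw [min_eq_right h, abs_of_nonneg (by linarith)]; ring
  refine ⟨hmin, ?_⟩
  -- the integral of the min
  have hImin : ∫ x, min (p₁ * f₁ x) (p₂ * f₂ x)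
      = 1 / 2 - (1 / 2) * ∫ x, |p₁ * f₁ x - p₂ * f₂ x| := by
    rw [show (fun x => min (p₁ * f₁ x) (p₂ * f₂ x)) = fun x =>
        (1 / 2) * (p₁ * f₁ x + p₂ * f₂ x) - (1 / 2) * |p₁ * f₁ x - p₂ * f₂ x|
      from funext hmin]
    rw [integral_sub (hih.const_mul _) (hig.const_mul _), integral_const_mul,
      integral_const_mul, hIh, mul_one]
  -- the Cauchy–Schwarz step
  set q : (Fin d → ℝ) → ℝ := fun x => (p₁ * f₁ x - p₂ * f₂ x) ^ 2 / (p₁ * f₁ x + p₂ * f₂ x)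
    with hq
  have hqnn : ∀ x, 0 ≤ q x := fun x =>
    div_nonneg (sq_nonneg _) (by linarith [hann x, hbnn x])
  have hqle : ∀ x, q x ≤ p₁ * f₁ x + p₂ * f₂ x := by
    intro x
    rcases eq_or_lt_of_le (by linarith [hann x, hbnn x] :
        (0:ℝ) ≤ p₁ * f₁ x + p₂ * f₂ x) with h | h
    · simp [hq, ← h]
    · rw [div_le_iff₀ h]
      nlinarith [hGH x, abs_nonneg (p₁ * f₁ x - p₂ * f₂ x),
        sq_abs (p₁ * f₁ x - p₂ * f₂ x)]
  have hqmeas : Measurable q := ((hma.sub hmb).pow_const 2).div (hma.add hmb)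
  have hqi : Integrable q := by
    refine hih.mono' hqmeas.aestronglyMeasurable (Filter.Eventually.of_forall fun x => ?_)
    rw [Real.norm_eq_abs, abs_of_nonneg (hqnn x)]
    exact hqle x
  have hIq : 0 ≤ ∫ x, q x := integral_nonneg hqnn
  -- define φ, ψ
  set φ : (Fin d → ℝ) → ℝ := fun x =>
    |p₁ * f₁ x - p₂ * f₂ x| / Real.sqrt (p₁ * f₁ x + p₂ * f₂ x) with hφ
  set ψ : (Fin d → ℝ) → ℝ := fun x => Real.sqrt (p₁ * f₁ x + p₂ * f₂ x) with hψ
  have hφnn : ∀ x, 0 ≤ φ x := fun x => div_nonneg (abs_nonneg _) (Real.sqrt_nonneg _)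
  have hψnn : ∀ x, 0 ≤ ψ x := fun x => Real.sqrt_nonneg _
  have hφψ : ∀ x, φ x * ψ x = |p₁ * f₁ x - p₂ * f₂ x| := by
    intro x
    rcases eq_or_lt_of_le (by linarith [hann x, hbnn x] :
        (0:ℝ) ≤ p₁ * f₁ x + p₂ * f₂ x) with h | h
    · have h0 : |p₁ * f₁ x - p₂ * f₂ x| = 0 :=
        le_antisymm (by have := hGH x; linarith) (abs_nonneg _)
      simp [hφ, hψ, h0]
    · exact div_mul_cancel₀ _ (Real.sqrt_ne_zero'.mpr h).symm.symm
  have hφsq : ∀ x, φ x ^ 2 = q x := by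
    intro x
    rw [hφ, hq]
    simp only []
    rw [div_pow, Real.sq_sqrt (by linarith [hann x, hbnn x]), sq_abs]
  have hψsq : ∀ x, ψ x ^ 2 = p₁ * f₁ x + p₂ * f₂ x := fun x =>
    Real.sq_sqrt (by linarith [hann x, hbnn x])
  have hφmeas : Measurable φ := (hma.sub hmb).abs.div (hma.add hmb).sqrt
  have hψmeas : Measurable ψ := (hma.add hmb).sqrt
  have hφmem : MemLp φ (ENNReal.ofReal 2) := by
    rw [show ENNReal.ofReal 2 = 2 by norm_num]
    rw [memLp_two_iff_integrable_sq hφmeas.aestronglyMeasurable]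
    exact hqi.congr (Filter.Eventually.of_forall fun x => (hφsq x).symm)
  have hψmem : MemLp ψ (ENNReal.ofReal 2) := by
    rw [show ENNReal.ofReal 2 = 2 by norm_num]
    rw [memLp_two_iff_integrable_sq hψmeas.aestronglyMeasurable]
    exact hih.congr (Filter.Eventually.of_forall fun x => (hψsq x).symm)
  have hCS := integral_mul_le_Lp_mul_Lq_of_nonneg
    (Real.holderConjugate_iff.mpr ⟨one_lt_two, by norm_num⟩)
    (Filter.Eventually.of_forall hφnn) (Filter.Eventually.of_forall hψnn) hφmem hψmem
  have h2 : ∀ y : ℝ, y ^ (2:ℝ) = y ^ 2 := fun y => by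
    rw [show (2:ℝ) = ((2:ℕ):ℝ) by norm_num, Real.rpow_natCast]
  simp only [h2] at hCS
  have hφψ' : ∫ x, φ x * ψ x = ∫ x, |p₁ * f₁ x - p₂ * f₂ x| :=
    integral_congr_ae (Filter.Eventually.of_forall hφψ)
  have hφsq' : ∫ x, φ x ^ 2 = ∫ x, q x :=
    integral_congr_ae (Filter.Eventually.of_forall hφsq)
  have hψsq' : ∫ x, ψ x ^ 2 = 1 := by
    rw [integral_congr_ae (Filter.Eventually.of_forall hψsq), hIh]
  rw [hφψ', hφsq', hψsq', Real.one_rpow, mul_one] at hCS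
  have hfin : ∫ x, |p₁ * f₁ x - p₂ * f₂ x| ≤ Real.sqrt (∫ x, q x) := by
    calc ∫ x, |p₁ * f₁ x - p₂ * f₂ x| ≤ (∫ x, q x) ^ (1/2 : ℝ) := hCS
    _ = Real.sqrt (∫ x, q x) := (Real.sqrt_eq_rpow _).symm
  rw [ge_iff_le, hImin]
  have : 0 ≤ Real.sqrt (∫ x, q x) := Real.sqrt_nonneg _
  linarith [hfin]
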